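/- The frame rule with disjointness is invertible: let σ be a single atom (t↦u or Arr(t,u)) and Disj(σ,Σ) the pure formula asserting the address set of σ is disjoint from that of Σ. Then Π ∧ (σ * Σ) ⊨ ⋁_{i∈I} ∃y⃗ᵢ(Πᵢ ∧ (σ * Σᵢ)) if and only if Π ∧ Disj(σ,Σ) ∧ Σ ⊨ ⋁_{i∈I} ∃y⃗ᵢ(Πᵢ ∧ Σᵢ), provided the variables y⃗ᵢ do not occur in σ. -/
import Mathlib


abbrev Var := ℕ
abbrev Store := Var → ℕ
abbrev Heap := ℕ → Option ℕ

def Dom (h : Heap) : Set ℕ := {n | h n ≠ none}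

def hunion (h1 h2 : Heap) : Heap := fun n =>
  match h1 n with
  | some v => some v
  | none => h2 n

def hempty : Heap := fun _ => none

inductive Term
  | var : Var → Term
  | const : ℕ → Term
  | add : Term → Term → Term

def Term.eval (s : Store) : Term → ℕ
  | .var x => s x
  | .const n => n
  | .add t u => t.eval s + u.eval s

def Term.FV : Term → Set Var
  | .var x => {x}
  | .const _ => ∅
  | .add t u => t.FV ∪ u.FV

inductive Formula
  | eq : Term → Term → Formula
  | and : Formula → Formula → Formula
  | not : Formula → Formula
  | ex : Var → Formula → Formula
  | emp : Formula
  | pto : Term → Term → Formula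
  | arr : Term → Term → Formula
  | sep : Formula → Formula → Formula

def sat (s : Store) (h : Heap) : Formula → Prop
  | .eq t u => t.eval s = u.eval s
  | .and f g => sat s h f ∧ sat s h g
  | .not f => ¬ sat s h f
  | .ex x f => ∃ a : ℕ, sat (Function.update s x a) h f
  | .emp => Dom h = ∅
  | .pto t u => Dom h = {t.eval s} ∧ h (t.eval s) = some (u.eval s)
  | .arr t u => t.eval s ≤ u.eval s ∧ Dom h = Set.Icc (t.eval s) (u.eval s)
  | .sep f g => ∃ h1 h2 : Heap, Dom h1 ∩ Dom h2 = ∅ ∧ h = hunion h1 h2 ∧ sat s h1 f ∧ sat s h2 g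

def Formula.FV : Formula → Set Var
  | .eq t u => t.FV ∪ u.FV
  | .and f g => f.FV ∪ g.FV
  | .not f => f.FV
  | .ex x f => f.FV \ {x}
  | .emp => ∅
  | .pto t u => t.FV ∪ u.FV
  | .arr t u => t.FV ∪ u.FV
  | .sep f g => f.FV ∪ g.FV

inductive Atom
  | emp : Atom
  | pto : Term → Term → Atom
  | arr : Term → Term → Atom

abbrev Spatial := List Atom

def satAtom (s : Store) (h : Heap) : Atom → Prop
  | .emp => Dom h = ∅
  | .pto t u => Dom h = {t.eval s} ∧ h (t.eval s) = some (u.eval s)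
  | .arr t u => t.eval s ≤ u.eval s ∧ Dom h = Set.Icc (t.eval s) (u.eval s)

def satSp (s : Store) (h : Heap) : Spatial → Prop
  | [] => Dom h = ∅
  | a :: sg => ∃ h1 h2 : Heap, Dom h1 ∩ Dom h2 = ∅ ∧ h = hunion h1 h2 ∧
      satAtom s h1 a ∧ satSp s h2 sg

def ltSp (s : Store) (v : ℕ) : Spatial → Prop
  | [] => True
  | .emp :: sg => ltSp s v sg
  | .pto t _ :: _ => v < t.eval s
  | .arr t _ :: _ => v < t.eval s

def sorted' (s : Store) : Spatial → Prop
  | [] => True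
  | .emp :: sg => sorted' s sg
  | .pto t _ :: sg => ltSp s (t.eval s) sg ∧ sorted' s sg
  | .arr t u :: sg => t.eval s ≤ u.eval s ∧ ltSp s (u.eval s) sg ∧ sorted' s sg

def sortedSp (s : Store) (sg : Spatial) : Prop := ltSp s 0 sg ∧ sorted' s sg

def SDom (s : Store) : Spatial → Set ℕ
  | [] => ∅
  | .emp :: sg => SDom s sg
  | .pto t _ :: sg => {t.eval s} ∪ SDom s sg
  | .arr t u :: sg => Set.Icc (t.eval s) (u.eval s) ∪ SDom s sg

def Atom.FV : Atom → Set Var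
  | .emp => ∅
  | .pto t u => t.FV ∪ u.FV
  | .arr t u => t.FV ∪ u.FV

/-- the set of cell addresses required by a single atom -/
def ADom (s : Store) : Atom → Set ℕ
  | .emp => ∅
  | .pto t _ => {t.eval s}
  | .arr t u => Set.Icc (t.eval s) (u.eval s)

/-- `Disj(σ,Σ)`: the memory cells used by `σ` and `Σ` are disjoint
(for an array atom this includes that its address range is nonempty). -/
def DisjP (s : Store) (a : Atom) (sg : Spatial) : Prop :=
  ADom s a ∩ SDom s sg = ∅ ∧
  (match a with | .arr t u => t.eval s ≤ u.eval s | _ => True)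

/-- simultaneous update of a store by a list of variables and values -/
def upds (s : Store) (ys : List Var) (vs : List ℕ) : Store :=
  (ys.zip vs).foldl (fun s p => Function.update s p.1 p.2) s

lemma upds_notin (s : Store) (ys : List Var) (vs : List ℕ) (x : Var) (hx : x ∉ ys) :
    upds s ys vs x = s x := by
  induction ys generalizing s vs with
  | nil => simp [upds]
  | cons y ys ih =>
    cases vs with
    | nil => simp [upds]
    | cons v vs =>
      simp only [upds, List.zip_cons_cons, List.foldl_cons]
      have : ((ys.zip vs).foldl (fun s p => Function.update s p.1 p.2)
          (Function.update s y v)) = upds (Function.update s y v) ys vs := rfl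
      rw [this, ih _ _ (by simp at hx; exact hx.2)]
      exact Function.update_of_ne (by simp at hx; exact hx.1) _ _

lemma eval_agree (s s' : Store) (t : Term) (hag : ∀ x ∈ t.FV, s x = s' x) :
    t.eval s = t.eval s' := by
  induction t with
  | var x => exact hag x (by simp [Term.FV])
  | const n => rfl
  | add t u iht ihu =>
    simp only [Term.eval]
    rw [iht fun x hx => hag x (Or.inl hx), ihu fun x hx => hag x (Or.inr hx)]

lemma eval_upds (s : Store) (ys : List Var) (vs : List ℕ) (t : Term)
    (hf : ∀ y ∈ ys, y ∉ t.FV) : t.eval (upds s ys vs) = t.eval s :=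
  eval_agree _ _ _ fun x hx => upds_notin s ys vs x fun hxy => hf x hxy hx

lemma satAtom_upds (s : Store) (ys : List Var) (vs : List ℕ) (a : Atom)
    (hf : ∀ y ∈ ys, y ∉ a.FV) (h : Heap) :
    satAtom (upds s ys vs) h a ↔ satAtom s h a := by
  cases a with
  | emp => exact Iff.rfl
  | pto t u =>
    have ht := eval_upds s ys vs t fun y hy hm => hf y hy (Or.inl hm)
    have hu := eval_upds s ys vs u fun y hy hm => hf y hy (Or.inr hm)
    simp [satAtom, ht, hu]
  | arr t u =>
    have ht := eval_upds s ys vs t fun y hy hm => hf y hy (Or.inl hm)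
    have hu := eval_upds s ys vs u fun y hy hm => hf y hy (Or.inr hm)
    simp [satAtom, ht, hu]

lemma ADom_upds (s : Store) (ys : List Var) (vs : List ℕ) (a : Atom)
    (hf : ∀ y ∈ ys, y ∉ a.FV) : ADom (upds s ys vs) a = ADom s a := by
  cases a with
  | emp => rfl
  | pto t u =>
    have ht := eval_upds s ys vs t fun y hy hm => hf y hy (Or.inl hm)
    simp [ADom, ht]
  | arr t u =>
    have ht := eval_upds s ys vs t fun y hy hm => hf y hy (Or.inl hm)
    have hu := eval_upds s ys vs u fun y hy hm => hf y hy (Or.inr hm)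
    simp [ADom, ht, hu]

lemma Dom_hunion (h1 h2 : Heap) : Dom (hunion h1 h2) = Dom h1 ∪ Dom h2 := by
  ext n
  cases hc : h1 n <;> simp [Dom, hunion, hc]

lemma Dom_of_satAtom (s : Store) (h : Heap) (a : Atom) (hs : satAtom s h a) :
    Dom h = ADom s a := by
  cases a with
  | emp => exact hs
  | pto t u => exact hs.1
  | arr t u => exact hs.2

lemma Dom_of_satSp (s : Store) : ∀ (sg : Spatial) (h : Heap), satSp s h sg → Dom h = SDom s sg := by
  intro sg
  induction sg with
  | nil => intro h hs; exact hs
  | cons a sg ih =>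
    intro h hs
    obtain ⟨h1, h2, hd, heq, ha, hsg⟩ := hs
    subst heq
    rw [Dom_hunion, Dom_of_satAtom s h1 a ha, ih h2 hsg]
    cases a <;> simp [ADom, SDom]

/-- a canonical heap satisfying an atom -/
def atomHeap (s : Store) : Atom → Heap
  | .emp => hempty
  | .pto t u => fun n => if n = t.eval s then some (u.eval s) else none
  | .arr t u => fun n => if t.eval s ≤ n ∧ n ≤ u.eval s then some 0 else none

lemma satAtom_atomHeap (s : Store) (a : Atom)
    (hle : match a with | .arr t u => t.eval s ≤ u.eval s | _ => True) :
    satAtom s (atomHeap s a) a := by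
  cases a with
  | emp =>
    show Dom hempty = ∅
    ext n; simp [Dom, hempty]
  | pto t u =>
    refine ⟨?_, by simp [atomHeap]⟩
    ext n; simp [Dom, atomHeap]
  | arr t u =>
    refine ⟨hle, ?_⟩
    ext n; simp [Dom, atomHeap, Set.mem_Icc]

lemma Dom_atomHeap (s : Store) (a : Atom)
    (hle : match a with | .arr t u => t.eval s ≤ u.eval s | _ => True) :
    Dom (atomHeap s a) = ADom s a :=
  Dom_of_satAtom s _ a (satAtom_atomHeap s a hle)

/-- the invertible frame rule:
`Π ∧ σ*Σ ⊨ ⋁ᵢ ∃y⃗ᵢ(Πᵢ ∧ σ*Σᵢ)` iff `Π ∧ Disj(σ,Σ) ∧ Σ ⊨ ⋁ᵢ ∃y⃗ᵢ(Πᵢ ∧ Σᵢ)`,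
provided the `y⃗ᵢ` do not occur in `σ`. -/
theorem stmt13 {I : Type} [Fintype I] (a : Atom) (Pi : Store → Prop) (sg : Spatial)
    (Pii : I → Store → Prop) (sgi : I → Spatial) (ys : I → List Var)
    (hfresh : ∀ i y, y ∈ ys i → y ∉ a.FV) :
    (∀ (s : Store) (h : Heap), Pi s → satSp s h (a :: sg) →
      ∃ i, ∃ vs : List ℕ, (Pii i) (upds s (ys i) vs) ∧
        satSp (upds s (ys i) vs) h (a :: sgi i)) ↔
    (∀ (s : Store) (h : Heap), Pi s → DisjP s a sg → satSp s h sg →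
      ∃ i, ∃ vs : List ℕ, (Pii i) (upds s (ys i) vs) ∧
        satSp (upds s (ys i) vs) h (sgi i)) := by
  constructor
  · -- LHS → RHS
    intro H s h hPi hdisj hsat
    set A := atomHeap s a with hA
    have hDA : Dom A = ADom s a := Dom_atomHeap s a hdisj.2
    have hDh : Dom h = SDom s sg := Dom_of_satSp s sg h hsat
    have hdisjAh : Dom A ∩ Dom h = ∅ := by rw [hDA, hDh]; exact hdisj.1
    have hsatFull : satSp s (hunion A h) (a :: sg) :=
      ⟨A, h, hdisjAh, rfl, satAtom_atomHeap s a hdisj.2, hsat⟩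
    obtain ⟨i, vs, hPii, hsp⟩ := H s (hunion A h) hPi hsatFull
    obtain ⟨h1, h2, hd', heq', ha', hsg'⟩ := hsp
    have hD1 : Dom h1 = Dom A := by
      rw [Dom_of_satAtom _ h1 a ha', ADom_upds s (ys i) vs a (hfresh i), hDA]
    have h2h : h2 = h := by
      funext n
      by_cases hn : n ∈ Dom h2
      · -- h2 n = some v; show h n = h2 n
        have hn1 : n ∉ Dom h1 := by
          intro hn1
          have : n ∈ Dom h1 ∩ Dom h2 := ⟨hn1, hn⟩
          rw [hd'] at this; exact this
        have hnA : n ∉ Dom A := by rwa [← hD1]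
        have e1 : hunion A h n = h n := by
          have : A n = none := by
            by_contra hc; exact hnA hc
          simp [hunion, this]
        have e2 : hunion h1 h2 n = h2 n := by
          have : h1 n = none := by
            by_contra hc; exact hn1 hc
          simp [hunion, this]
        rw [← e2, ← heq', e1]
      · have hh2 : h2 n = none := by by_contra hcc; exact hn hcc
        rw [hh2]
        by_contra hc
        have hnh : n ∈ Dom h := fun he => hc he.symm
        have hDU : Dom h1 ∪ Dom h2 = Dom A ∪ Dom h := by
          rw [← Dom_hunion, ← Dom_hunion, heq']
        have hnA : n ∉ Dom A := fun hnA =>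
          Set.eq_empty_iff_forall_notMem.mp hdisjAh n ⟨hnA, hnh⟩
        have hmem : n ∈ Dom h1 ∪ Dom h2 := by rw [hDU]; exact Or.inr hnh
        rcases hmem with h1n | h2n
        · exact hnA (hD1 ▸ h1n)
        · exact hn h2n
    exact ⟨i, vs, hPii, h2h ▸ hsg'⟩
  · -- RHS → LHS
    intro H s h hPi hsat
    obtain ⟨h1, h2, hd, heq, ha, hsg⟩ := hsat
    have hD1 : Dom h1 = ADom s a := Dom_of_satAtom s h1 a ha
    have hD2 : Dom h2 = SDom s sg := Dom_of_satSp s sg h2 hsg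
    have hdisj : DisjP s a sg := by
      refine ⟨by rw [← hD1, ← hD2]; exact hd, ?_⟩
      cases a with
      | emp => trivial
      | pto t u => trivial
      | arr t u => exact ha.1
    obtain ⟨i, vs, hPii, hsgi⟩ := H s h2 hPi hdisj hsg
    exact ⟨i, vs, hPii, h1, h2, hd, heq,
      (satAtom_upds s (ys i) vs a (hfresh i) h1).mpr ha, hsgi⟩
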